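/- Let F be a field of characteristic not 2 or 3, let k ∈ F be nonzero, and let K = F[z]/(z² − k), a quadratic étale F-algebra, with norm map N = Algebra.norm from K to F (K being free of rank 2 over F). Let V(F)_{4k} denote the set of integer-matrix binary cubic forms over F with reduced discriminant equal to 4k, equipped with the SL₂(F)-action by linear change of variable. Then there is a bijection between the set of SL₂(F)-orbits on V(F)_{4k} and the group (K*/K*³)_{N=1}, i.e., the kernel of the group homomorphism K^×/(K^×)³ → F^×/(F^×)³ induced by the norm N. -/

import Mathlib

/-!
STATEMENT 5: Let F be a field of characteristic not 2 or 3, k ∈ F nonzero, and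
K = F[z]/(z² − k) the quadratic étale F-algebra with norm N = Algebra.norm.  Then there
is a bijection between the set of SL₂(F)-orbits on the set V(F)_{4k} of integer-matrix
binary cubic forms over F of reduced discriminant 4k (with the action by linear change
of variable) and the group (K*/K*³)_{N=1}, the kernel of the homomorphism
K^×/(K^×)³ → F^×/(F^×)³ induced by the norm.
-/

open Matrix MatrixGroups

/-- An (integer-matrix) binary cubic form over `R`: the quadruple `(a,b,c,d)` stands for
`f(x,y) = a·x³ + 3b·x²y + 3c·xy² + d·y³`. -/
abbrev BCF (R : Type*) := R × R × R × R

/-- The reduced discriminant `disc(f) = a²d² − 3b²c² − 6abcd + 4ac³ + 4b³d` of the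
integer-matrix binary cubic form `(a,b,c,d)`. -/
def bcfDisc {R : Type*} [CommRing R] (f : BCF R) : R :=
  f.1 ^ 2 * f.2.2.2 ^ 2 - 3 * f.2.1 ^ 2 * f.2.2.1 ^ 2
    - 6 * f.1 * f.2.1 * f.2.2.1 * f.2.2.2 + 4 * f.1 * f.2.2.1 ^ 3 + 4 * f.2.1 ^ 3 * f.2.2.2

/-- The value `f(x,y)` of the integer-matrix binary cubic form `f = (a,b,c,d)`. -/
def bcfVal {R : Type*} [CommRing R] (f : BCF R) (x y : R) : R :=
  f.1 * x ^ 3 + 3 * f.2.1 * x ^ 2 * y + 3 * f.2.2.1 * x * y ^ 2 + f.2.2.2 * y ^ 3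

/-- The action of a 2×2 matrix `γ = ((p,q),(r,s))` on integer-matrix binary cubic forms
by linear change of variable, `(γ·f)(x,y) = f(px+qy, rx+sy)`, written in coordinates. -/
def bcfAct {R : Type*} [CommRing R] (γ : Matrix (Fin 2) (Fin 2) R) (f : BCF R) : BCF R :=
  (f.1 * γ 0 0 ^ 3 + 3 * f.2.1 * γ 0 0 ^ 2 * γ 1 0 + 3 * f.2.2.1 * γ 0 0 * γ 1 0 ^ 2
     + f.2.2.2 * γ 1 0 ^ 3,
   f.1 * γ 0 0 ^ 2 * γ 0 1 + f.2.1 * (γ 0 0 ^ 2 * γ 1 1 + 2 * γ 0 0 * γ 0 1 * γ 1 0)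
     + f.2.2.1 * (2 * γ 0 0 * γ 1 0 * γ 1 1 + γ 0 1 * γ 1 0 ^ 2) + f.2.2.2 * γ 1 0 ^ 2 * γ 1 1,
   f.1 * γ 0 0 * γ 0 1 ^ 2 + f.2.1 * (2 * γ 0 0 * γ 0 1 * γ 1 1 + γ 0 1 ^ 2 * γ 1 0)
     + f.2.2.1 * (γ 0 0 * γ 1 1 ^ 2 + 2 * γ 0 1 * γ 1 0 * γ 1 1) + f.2.2.2 * γ 1 0 * γ 1 1 ^ 2,
   f.1 * γ 0 1 ^ 3 + 3 * f.2.1 * γ 0 1 ^ 2 * γ 1 1 + 3 * f.2.2.1 * γ 0 1 * γ 1 1 ^ 2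
     + f.2.2.2 * γ 1 1 ^ 3)

/-- The action is by substitution: `(γ·f)(x,y) = f(px+qy, rx+sy)`. -/
theorem bcfAct_val {R : Type*} [CommRing R] (γ : Matrix (Fin 2) (Fin 2) R) (f : BCF R)
    (x y : R) : bcfVal (bcfAct γ f) x y
      = bcfVal f (γ 0 0 * x + γ 0 1 * y) (γ 1 0 * x + γ 1 1 * y) := by
  simp only [bcfAct, bcfVal]; ring

theorem bcfAct_one {R : Type*} [CommRing R] (f : BCF R) : bcfAct (1 : Matrix (Fin 2) (Fin 2) R) f = f := by
  obtain ⟨a, b, c, d⟩ := f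
  simp [bcfAct, Matrix.one_apply]

theorem bcfAct_mul {R : Type*} [CommRing R] (g h : Matrix (Fin 2) (Fin 2) R) (f : BCF R) :
    bcfAct (g * h) f = bcfAct h (bcfAct g f) := by
  obtain ⟨a, b, c, d⟩ := f
  simp only [bcfAct, Matrix.mul_apply, Fin.sum_univ_two, Prod.mk.injEq]
  refine ⟨by ring, by ring, by ring, by ring⟩

section Forms
variable {F : Type*} [Field F] (k : F)

/-- Hessian coefficients. -/
def hA (f : BCF F) : F := f.1 * f.2.2.1 - f.2.1 ^ 2
def hB (f : BCF F) : F := f.1 * f.2.2.2 - f.2.1 * f.2.2.1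
def hC (f : BCF F) : F := f.2.1 * f.2.2.2 - f.2.2.1 ^ 2

lemma hess_disc (f : BCF F) : hB f ^ 2 - 4 * hA f * hC f = bcfDisc f := by
  simp only [hA, hB, hC, bcfDisc]; ring

def toF (α β : F) : BCF F := (β, α, k * β, k * α)

lemma disc_toF (α β : F) : bcfDisc (toF k α β) = 4 * k * (α ^ 2 - k * β ^ 2) ^ 2 := by
  simp only [toF, bcfDisc]; ring

lemma hA_toF (α β : F) : hA (toF k α β) = -(α ^ 2 - k * β ^ 2) := by
  simp only [toF, hA]; ring
lemma hB_toF (α β : F) : hB (toF k α β) = 0 := by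
  simp only [toF, hB]; ring
lemma hC_toF (α β : F) : hC (toF k α β) = k * (α ^ 2 - k * β ^ 2) := by
  simp only [toF, hC]; ring

lemma hA_act (γ : Matrix (Fin 2) (Fin 2) F) (f : BCF F) :
    hA (bcfAct γ f) = (γ 0 0 * γ 1 1 - γ 0 1 * γ 1 0) ^ 2 *
      (hA f * γ 0 0 ^ 2 + hB f * γ 0 0 * γ 1 0 + hC f * γ 1 0 ^ 2) := by
  simp only [hA, hB, hC, bcfAct]; ring

lemma hB_act (γ : Matrix (Fin 2) (Fin 2) F) (f : BCF F) :
    hB (bcfAct γ f) = (γ 0 0 * γ 1 1 - γ 0 1 * γ 1 0) ^ 2 *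
      (2 * hA f * γ 0 0 * γ 0 1 + hB f * (γ 0 0 * γ 1 1 + γ 0 1 * γ 1 0)
        + 2 * hC f * γ 1 0 * γ 1 1) := by
  simp only [hA, hB, hC, bcfAct]; ring

lemma hC_act (γ : Matrix (Fin 2) (Fin 2) F) (f : BCF F) :
    hC (bcfAct γ f) = (γ 0 0 * γ 1 1 - γ 0 1 * γ 1 0) ^ 2 *
      (hA f * γ 0 1 ^ 2 + hB f * γ 0 1 * γ 1 1 + hC f * γ 1 1 ^ 2) := by
  simp only [hA, hB, hC, bcfAct]; ring

lemma disc_act (γ : Matrix (Fin 2) (Fin 2) F) (f : BCF F)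
    (hdet : γ 0 0 * γ 1 1 - γ 0 1 * γ 1 0 = 1) :
    bcfDisc (bcfAct γ f) = bcfDisc f := by
  rw [← hess_disc, hA_act, hB_act, hC_act, hdet, ← hess_disc]
  linear_combination (hB f ^ 2 - 4 * hA f * hC f) *
    (γ 0 0 * γ 1 1 - γ 0 1 * γ 1 0 + 1) * hdet

/-- syzygy coefficient identity -/
lemma syzygy (f : BCF F) :
    (f.1 ^ 2 * f.2.2.2 - 3 * f.1 * f.2.1 * f.2.2.1 + 2 * f.2.1 ^ 3) ^ 2 + 4 * hA f ^ 3
      = f.1 ^ 2 * bcfDisc f := by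
  simp only [hA, bcfDisc]; ring

end Forms

section Forms2
variable {F : Type*} [Field F] (k : F)

lemma entries_fin2 (a b c d : F) : (!![a, b; c, d] : Matrix (Fin 2) (Fin 2) F) 0 0 = a
    ∧ (!![a, b; c, d] : Matrix (Fin 2) (Fin 2) F) 0 1 = b
    ∧ (!![a, b; c, d] : Matrix (Fin 2) (Fin 2) F) 1 0 = c
    ∧ (!![a, b; c, d] : Matrix (Fin 2) (Fin 2) F) 1 1 = d := by
  refine ⟨?_, ?_, ?_, ?_⟩ <;> simp

/-- I2: multiplication-by-ν matrices act on `toF` as multiplication of the K-coordinates. -/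
lemma act_mulmat (α β p r : F) :
    bcfAct !![p, k * r; r, p] (toF k α β)
      = toF k (α * (p ^ 3 + 3 * k * p * r ^ 2) + k * (β * (3 * p ^ 2 * r + k * r ^ 3)))
          (β * (p ^ 3 + 3 * k * p * r ^ 2) + α * (3 * p ^ 2 * r + k * r ^ 3)) := by
  obtain ⟨h1, h2, h3, h4⟩ := entries_fin2 p (k*r) r p
  simp only [bcfAct, toF, h1, h2, h3, h4]
  refine Prod.ext ?_ (Prod.ext ?_ (Prod.ext ?_ ?_)) <;> ring

end Forms2

section Core
variable {F : Type*} [Field F] (k : F)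

open Matrix

abbrev SL2 (F : Type*) [Field F] := Matrix.SpecialLinearGroup (Fin 2) F

def mkSL (a b c d : F) (h : a * d - b * c = 1) : SL2 F :=
  ⟨!![a, b; c, d], by rw [Matrix.det_fin_two_of]; exact h⟩

lemma mkSL_coe (a b c d : F) (h : a * d - b * c = 1) :
    (mkSL a b c d h : Matrix (Fin 2) (Fin 2) F) = !![a, b; c, d] := rfl

lemma det_entry_eq (γ : SL2 F) :
    (γ : Matrix (Fin 2) (Fin 2) F) 0 0 * (γ : Matrix (Fin 2) (Fin 2) F) 1 1
      - (γ : Matrix (Fin 2) (Fin 2) F) 0 1 * (γ : Matrix (Fin 2) (Fin 2) F) 1 0 = 1 := by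
  have := γ.prop
  rwa [Matrix.det_fin_two] at this

lemma step1 (h2 : (2 : F) ≠ 0) (hk : k ≠ 0) (f : BCF F) (hf : bcfDisc f = 4 * k) :
    ∃ γ : SL2 F, hA (bcfAct (γ : Matrix (Fin 2) (Fin 2) F) f) ≠ 0 := by
  by_cases ha : hA f ≠ 0
  · refine ⟨mkSL 1 0 0 1 (by ring), ?_⟩
    rw [mkSL_coe, hA_act]
    obtain ⟨e1, e2, e3, e4⟩ := entries_fin2 (1:F) 0 0 1
    rw [e1, e2, e3, e4]
    simpa using ha
  by_cases hc : hC f ≠ 0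
  · refine ⟨mkSL 0 (-1) 1 0 (by ring), ?_⟩
    rw [mkSL_coe, hA_act]
    obtain ⟨e1, e2, e3, e4⟩ := entries_fin2 (0:F) (-1) 1 0
    rw [e1, e2, e3, e4]
    simpa using hc
  · push_neg at ha hc
    have hb : hB f ≠ 0 := by
      intro h
      have := hess_disc f
      rw [h, ha, hf] at this
      have h4 : (4 : F) ≠ 0 := by
        intro h4; apply h2
        have : (2:F) * 2 = 0 := by rw [← h4]; norm_num
        rcases mul_eq_zero.mp this with h | h <;> exact h
      apply mul_ne_zero h4 hk
      rw [← this]; ring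
    refine ⟨mkSL 1 0 1 1 (by ring), ?_⟩
    rw [mkSL_coe, hA_act]
    obtain ⟨e1, e2, e3, e4⟩ := entries_fin2 (1:F) 0 1 1
    rw [e1, e2, e3, e4, ha, hc]
    simpa using hb

end Core

section Core2
variable {F : Type*} [Field F] (k : F)

lemma four_ne (h2 : (2 : F) ≠ 0) : (4 : F) ≠ 0 := by
  intro hh
  apply h2
  have h : (2 : F) * 2 = 0 := by linear_combination hh
  rcases mul_eq_zero.mp h with h | h <;> exact h

lemma L9 (k : F) (g : BCF F) (ha : hA g = -1) (hb : hB g = 0) (hc : hC g = k) :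
    g = toF k g.2.1 g.1 ∧ g.2.1 ^ 2 - k * g.1 ^ 2 = 1 := by
  obtain ⟨a, b, c, d⟩ := g
  simp only [hA, hB, hC] at ha hb hc
  by_cases h : a = 0
  · subst h
    have hb2 : b ^ 2 = 1 := by linear_combination -ha
    have hbne : b ≠ 0 := by intro h; rw [h] at hb2; simp at hb2
    have hbc : b * c = 0 := by linear_combination -hb
    have hc0 : c = 0 := by
      rcases mul_eq_zero.mp hbc with h | h
      · exact absurd h hbne
      · exact h
    subst hc0
    have h1 : b * d = k := by linear_combination hc
    have hd : d = k * b := by linear_combination b * h1 - d * hb2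
    constructor
    · simp only [toF]
      rw [hd]
      simp
    · linear_combination hb2
  · have h1 : a * d = b * c := by linear_combination hb
    have h3 : b ^ 2 - a * c = 1 := by linear_combination -ha
    have h2' : c * (b ^ 2 - a * c) = k * a := by linear_combination a * hc - b * h1
    rw [h3, mul_one] at h2'
    have hd : d = k * b := by
      have h4 : a * (d - k * b) = 0 := by linear_combination h1 + b * h2'
      rcases mul_eq_zero.mp h4 with h' | h'
      · exact absurd h' h
      · linear_combination h'
    constructor
    · simp only [toF]
      rw [h2', hd]
    · linear_combination h3 + a * h2'

lemma surj_core (h2 : (2 : F) ≠ 0) (hk : k ≠ 0) (f : BCF F) (hf : bcfDisc f = 4 * k) :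
    ∃ (γ : SL2 F) (α β : F), α ^ 2 - k * β ^ 2 = 1 ∧
      bcfAct (γ : Matrix (Fin 2) (Fin 2) F) f = toF k α β := by
  have h4 : (4 : F) ≠ 0 := four_ne h2
  obtain ⟨γ₁, hA1⟩ := step1 k h2 hk f hf
  obtain ⟨g, hg⟩ : ∃ x, x = bcfAct (γ₁ : Matrix (Fin 2) (Fin 2) F) f := ⟨_, rfl⟩
  rw [← hg] at hA1
  have hdiscg : bcfDisc g = 4 * k := by rw [hg, disc_act _ _ (det_entry_eq γ₁), hf]
  obtain ⟨A, hAd⟩ : ∃ x, x = hA g := ⟨_, rfl⟩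
  rw [← hAd] at hA1
  -- step 2 : kill B
  obtain ⟨u, hu⟩ : ∃ x, x = -hB g / (2 * A) := ⟨_, rfl⟩
  have h2A : (2 : F) * A ≠ 0 := mul_ne_zero h2 hA1
  obtain ⟨d1, d2, d3, d4⟩ := entries_fin2 (1:F) u 0 1
  set γ₂ : SL2 F := mkSL 1 u 0 1 (by ring) with hγ₂
  obtain ⟨g₂, hg₂⟩ : ∃ x, x = bcfAct ((γ₂ : Matrix (Fin 2) (Fin 2) F)) g := ⟨_, rfl⟩
  have hA2 : hA g₂ = A := by
    rw [hg₂, hγ₂, mkSL_coe, hA_act, d1, d2, d3, d4, ← hAd]; ring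
  have hB2 : hB g₂ = 0 := by
    rw [hg₂, hγ₂, mkSL_coe, hB_act, d1, d2, d3, d4, hu, ← hAd]
    field_simp
    ring
  have hdisc2 : bcfDisc g₂ = 4 * k := by
    rw [hg₂, disc_act _ _ (by rw [hγ₂, mkSL_coe, d1, d2, d3, d4]; ring), hdiscg]
  have hC2 : hC g₂ * A = -k := by
    have h := hess_disc g₂
    rw [hB2, hA2, hdisc2] at h
    have h5 : (4 : F) * (hC g₂ * A + k) = 0 := by linear_combination -h
    rcases mul_eq_zero.mp h5 with h' | h'
    · exact absurd h' h4
    · linear_combination h'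
  -- step 3 : the w element
  obtain ⟨gg, hgg⟩ : ∃ x,
      x = g₂.1 ^ 2 * g₂.2.2.2 - 3 * g₂.1 * g₂.2.1 * g₂.2.2.1 + 2 * g₂.2.1 ^ 3 := ⟨_, rfl⟩
  obtain ⟨a₂, ha₂⟩ : ∃ x, x = g₂.1 := ⟨_, rfl⟩
  have hsyz : gg ^ 2 + 4 * A ^ 3 = a₂ ^ 2 * (4 * k) := by
    rw [hgg, ha₂, ← hA2, ← hdisc2]; exact syzygy g₂
  obtain ⟨w₁, hw₁⟩ : ∃ x, x = gg / (2 * A) := ⟨_, rfl⟩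
  obtain ⟨w₂, hw₂⟩ : ∃ x, x = a₂ / A := ⟨_, rfl⟩
  have hw : w₁ ^ 2 - k * w₂ ^ 2 = -A := by
    have h4A2 : (4 : F) * A ^ 2 ≠ 0 := mul_ne_zero h4 (pow_ne_zero 2 hA1)
    apply mul_left_cancel₀ h4A2
    have hx : (4 * A ^ 2) * (w₁ ^ 2 - k * w₂ ^ 2) = gg ^ 2 - 4 * k * a₂ ^ 2 := by
      rw [hw₁, hw₂]
      field_simp
      ring
    rw [hx]
    linear_combination hsyz
  obtain ⟨N, hN⟩ : ∃ x, x = -A := ⟨_, rfl⟩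
  rw [← hN] at hw
  have hNne : N ≠ 0 := by rw [hN]; exact neg_ne_zero.mpr hA1
  have hdet4 : w₁ / N * w₁ - -(k * w₂) / N * -w₂ = 1 := by
    field_simp
    linear_combination hw
  set γ₄ : SL2 F := mkSL (w₁ / N) (-(k * w₂) / N) (-w₂) w₁ hdet4 with hγ₄
  obtain ⟨g₃, hg₃⟩ : ∃ x, x = bcfAct ((γ₄ : Matrix (Fin 2) (Fin 2) F)) g₂ := ⟨_, rfl⟩
  obtain ⟨e1, e2, e3, e4⟩ := entries_fin2 (w₁ / N) (-(k * w₂) / N) (-w₂) w₁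
  have hCg2 : hC g₂ = -k / A := by rw [eq_div_iff hA1]; exact hC2
  have hA3 : hA g₃ = -1 := by
    rw [hg₃, hγ₄, mkSL_coe, hA_act, e1, e2, e3, e4, hdet4, hA2, hB2, hCg2, hN]
    field_simp
    linear_combination hw + hN
  have hB3 : hB g₃ = 0 := by
    rw [hg₃, hγ₄, mkSL_coe, hB_act, e1, e2, e3, e4, hdet4, hA2, hB2, hCg2, hN]
    field_simp
    ring
  have hC3 : hC g₃ = k := by
    rw [hg₃, hγ₄, mkSL_coe, hC_act, e1, e2, e3, e4, hdet4, hA2, hB2, hCg2, hN]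
    field_simp
    linear_combination -hw - hN
  obtain ⟨hform, hnorm⟩ := L9 k g₃ hA3 hB3 hC3
  refine ⟨γ₁ * γ₂ * γ₄, g₃.2.1, g₃.1, hnorm, ?_⟩
  have hmul : ((γ₁ * γ₂ * γ₄ : SL2 F) : Matrix (Fin 2) (Fin 2) F)
      = ((γ₁ : Matrix (Fin 2) (Fin 2) F) * γ₂) * γ₄ := by simp
  rw [hmul, bcfAct_mul, bcfAct_mul, ← hg, ← hg₂, ← hg₃]
  exact hform

end Core2

section Core3
variable {F : Type*} [Field F] (k : F)

lemma inj_core (h2 : (2 : F) ≠ 0) {α β α' β' : F} (h1 : α ^ 2 - k * β ^ 2 = 1) (h1' : α' ^ 2 - k * β' ^ 2 = 1)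
    (γ : SL2 F) (h : bcfAct (γ : Matrix (Fin 2) (Fin 2) F) (toF k α β) = toF k α' β') :
    ∃ p r : F, p ^ 2 - k * r ^ 2 = 1 ∧
      α' = α * (p ^ 3 + 3 * k * p * r ^ 2) + k * (β * (3 * p ^ 2 * r + k * r ^ 3)) ∧
      β' = β * (p ^ 3 + 3 * k * p * r ^ 2) + α * (3 * p ^ 2 * r + k * r ^ 3) := by
  obtain ⟨p, hp⟩ : ∃ x, x = (γ : Matrix (Fin 2) (Fin 2) F) 0 0 := ⟨_, rfl⟩
  obtain ⟨q, hq⟩ : ∃ x, x = (γ : Matrix (Fin 2) (Fin 2) F) 0 1 := ⟨_, rfl⟩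
  obtain ⟨r, hr⟩ : ∃ x, x = (γ : Matrix (Fin 2) (Fin 2) F) 1 0 := ⟨_, rfl⟩
  obtain ⟨s, hs⟩ : ∃ x, x = (γ : Matrix (Fin 2) (Fin 2) F) 1 1 := ⟨_, rfl⟩
  have hdet : p * s - q * r = 1 := by rw [hp, hq, hr, hs]; exact det_entry_eq γ
  -- Hessian equations
  have hAval : hA (toF k α β) = -1 := by rw [hA_toF, h1]
  have hBval : hB (toF k α β) = 0 := hB_toF k α β
  have hCval : hC (toF k α β) = k := by rw [hC_toF, h1, mul_one]
  have E1 : p ^ 2 - k * r ^ 2 = 1 := by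
    have := hA_act (γ : Matrix (Fin 2) (Fin 2) F) (toF k α β)
    rw [h, ← hp, ← hq, ← hr, ← hs, hdet, hAval, hBval, hCval, hA_toF, h1'] at this
    linear_combination this
  have E2 : p * q - k * r * s = 0 := by
    have := hB_act (γ : Matrix (Fin 2) (Fin 2) F) (toF k α β)
    rw [h, ← hp, ← hq, ← hr, ← hs, hdet, hAval, hBval, hCval, hB_toF] at this
    have h22 : (2 : F) * (p * q - k * r * s) = 0 := by linear_combination this
    rcases mul_eq_zero.mp h22 with h' | h'
    · exact absurd h' h2
    · exact h'
  have E3 : -q ^ 2 + k * s ^ 2 = k := by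
    have := hC_act (γ : Matrix (Fin 2) (Fin 2) F) (toF k α β)
    rw [h, ← hp, ← hq, ← hr, ← hs, hdet, hAval, hBval, hCval, hC_toF, h1', mul_one] at this
    linear_combination -this
  have hsp : s = p := by
    have h5 : s * (p ^ 2 - k * r ^ 2) = p := by linear_combination p * hdet + r * E2
    rw [E1, mul_one] at h5
    exact h5
  have hq' : q = k * r := by
    by_cases hr0 : r = 0
    · subst hr0
      have hp2 : p ^ 2 = 1 := by linear_combination E1
      have : q ^ 2 = 0 := by linear_combination -E3 + k * hp2 + k * (s + p) * hsp
      rw [mul_zero]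
      exact pow_eq_zero_iff (n := 2) (by norm_num) |>.mp this
    · have h6 : (q - k * r) * r = 0 := by
        linear_combination -hdet + p * hsp + E1
      rcases mul_eq_zero.mp h6 with h' | h'
      · linear_combination h'
      · exact absurd h' hr0
  refine ⟨p, r, E1, ?_, ?_⟩
  · have h21 := congrArg (fun z : BCF F => z.2.1) h
    simp only [bcfAct, toF] at h21
    rw [← hp, ← hq, ← hr, ← hs] at h21
    rw [hsp, hq'] at h21
    linear_combination -h21
  · have h11 := congrArg (fun z : BCF F => z.1) h
    simp only [bcfAct, toF] at h11
    rw [← hp, ← hr] at h11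
    linear_combination -h11

end Core3


noncomputable section

open Polynomial

/-- The quadratic étale algebra `K = F[z]/(z² − k)`. -/
abbrev QuadAlg (F : Type*) [Field F] (k : F) : Type _ :=
  AdjoinRoot (Polynomial.X ^ 2 - Polynomial.C k : Polynomial F)

variable (F : Type*) [Field F] (k : F)

/-- The subgroup of cubes in the unit group of a commutative monoid. -/
def cubes (M : Type*) [CommGroup M] : Subgroup M := (powMonoidHom 3 : M →* M).range

/-- The norm map `K^× → F^×` on units, induced by `Algebra.norm`. -/
def normUnits : (QuadAlg F k)ˣ →* Fˣ := Units.map (Algebra.norm F : QuadAlg F k →* F)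

/-- The homomorphism `K^×/(K^×)³ → F^×/(F^×)³` induced by the norm. -/
def normOnCubeClasses : (QuadAlg F k)ˣ ⧸ cubes (QuadAlg F k)ˣ →* Fˣ ⧸ cubes Fˣ :=
  QuotientGroup.map _ _ (normUnits F k) (by
    rintro x ⟨y, rfl⟩
    exact ⟨normUnits F k y, by
      rw [powMonoidHom_apply, powMonoidHom_apply, map_pow]⟩)

/-- `V(F)_{4k}`: integer-matrix binary cubic forms over `F` of reduced discriminant `4k`. -/
abbrev V4k := {f : BCF F // bcfDisc f = 4 * k}

/-- Two forms of discriminant `4k` are equivalent if they differ by the action of an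
element of `SL₂(F)`. -/
def orbitRel : V4k F k → V4k F k → Prop := fun f g =>
  ∃ γ : Matrix.SpecialLinearGroup (Fin 2) F,
    bcfAct (γ : Matrix (Fin 2) (Fin 2) F) f.1 = g.1

lemma quadMonic : (Polynomial.X ^ 2 - Polynomial.C k : Polynomial F).Monic :=
  Polynomial.monic_X_pow_sub_C k (by norm_num)

lemma quadDeg : (Polynomial.X ^ 2 - Polynomial.C k : Polynomial F).natDegree = 2 := by
  simp [Polynomial.natDegree_X_pow_sub_C]

def rt : QuadAlg F k := AdjoinRoot.root _

lemma rt_sq : (rt F k : QuadAlg F k) ^ 2 = algebraMap F _ k := by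
  have : AdjoinRoot.mk _ (Polynomial.X ^ 2 - Polynomial.C k : Polynomial F) = 0 :=
    AdjoinRoot.mk_self
  rw [_root_.map_sub, _root_.map_pow, AdjoinRoot.mk_X, AdjoinRoot.mk_C, sub_eq_zero] at this
  exact this

def mkK (a b : F) : QuadAlg F k := algebraMap F _ a + algebraMap F _ b * rt F k

lemma mkK_mul (a b c d : F) :
    mkK F k a b * mkK F k c d = mkK F k (a*c + k*(b*d)) (a*d + b*c) := by
  simp only [mkK, _root_.map_add, _root_.map_mul]
  have h := rt_sq F k
  ring_nf
  rw [← h]  -- may need adjusting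
  ring

def pbK : PowerBasis F (QuadAlg F k) := AdjoinRoot.powerBasis' (quadMonic F k)

lemma pbK_dim : (pbK F k).dim = 2 := by
  simp [pbK, quadDeg]

def bK : Module.Basis (Fin 2) F (QuadAlg F k) :=
  (pbK F k).basis.reindex (finCongr (pbK_dim F k))

lemma bK_apply (i : Fin 2) : bK F k i = rt F k ^ (i : ℕ) := by
  have h := (pbK F k).basis_eq_pow ((finCongr (pbK_dim F k)).symm i)
  simp only [bK, Module.Basis.reindex_apply, h]
  simp [pbK, rt]
  rfl

lemma bK_zero : bK F k 0 = 1 := by simp [bK_apply]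

lemma bK_one : bK F k 1 = rt F k := by simp [bK_apply]

lemma mkK_eq_comb (a b : F) : mkK F k a b = a • bK F k 0 + b • bK F k 1 := by
  rw [bK_zero, bK_one]
  simp [mkK, Algebra.smul_def]

def caK (x : QuadAlg F k) : F := (bK F k).repr x 0
def cbK (x : QuadAlg F k) : F := (bK F k).repr x 1

lemma caK_mkK (a b : F) : caK F k (mkK F k a b) = a := by
  simp [caK, mkK_eq_comb, Finsupp.single_apply]

lemma cbK_mkK (a b : F) : cbK F k (mkK F k a b) = b := by
  simp [cbK, mkK_eq_comb, Finsupp.single_apply]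

lemma mkK_coords (x : QuadAlg F k) : mkK F k (caK F k x) (cbK F k x) = x := by
  rw [mkK_eq_comb]
  have := (bK F k).sum_repr x
  rw [Fin.sum_univ_two] at this
  exact this

lemma mkK_inj {a b a' b' : F} (h : mkK F k a b = mkK F k a' b') : a = a' ∧ b = b' := by
  constructor
  · have := congrArg (caK F k) h; simpa [caK_mkK] using this
  · have := congrArg (cbK F k) h; simpa [cbK_mkK] using this

lemma norm_mkK (a b : F) : Algebra.norm F (mkK F k a b) = a ^ 2 - k * b ^ 2 := by
  rw [Algebra.norm_eq_matrix_det (bK F k)]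
  have hM : Algebra.leftMulMatrix (bK F k) (mkK F k a b) = !![a, k*b; b, a] := by
    ext i j
    rw [Algebra.leftMulMatrix_eq_repr_mul]
    have hmul : mkK F k a b * rt F k = mkK F k (k*b) a := by
      simp only [mkK, _root_.map_add, _root_.map_mul, add_mul]
      rw [mul_assoc, ← pow_two, rt_sq]
      ring
    fin_cases j <;> fin_cases i <;>
      simp only [Fin.zero_eta, Fin.mk_one, Fin.isValue, bK_zero, bK_one, mul_one, hmul,
        Matrix.cons_val', Matrix.cons_val_zero, Matrix.cons_val_one, Matrix.head_cons,
        Matrix.empty_val', Matrix.cons_val_fin_one, Matrix.head_fin_const] <;>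
      simp [show ((bK F k).repr (mkK F k a b)) 0 = caK F k (mkK F k a b) from rfl,
        show ((bK F k).repr (mkK F k a b)) 1 = cbK F k (mkK F k a b) from rfl,
        show ((bK F k).repr (mkK F k (k*b) a)) 0 = caK F k (mkK F k (k*b) a) from rfl,
        show ((bK F k).repr (mkK F k (k*b) a)) 1 = cbK F k (mkK F k (k*b) a) from rfl,
        caK_mkK, cbK_mkK]
  rw [hM, Matrix.det_fin_two_of]
  ring

def sigK : QuadAlg F k →ₐ[F] QuadAlg F k :=
  AdjoinRoot.liftAlgHom _ (Algebra.ofId F _) (-(rt F k)) (by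
    show Polynomial.aeval (-(rt F k)) _ = 0
    simp only [_root_.map_sub, _root_.map_pow, Polynomial.aeval_X, Polynomial.aeval_C]
    rw [neg_pow, rt_sq]
    simp)

lemma sigK_rt : sigK F k (rt F k) = -(rt F k) := by
  apply AdjoinRoot.liftAlgHom_root

lemma sigK_mkK (a b : F) : sigK F k (mkK F k a b) = mkK F k a (-b) := by
  simp only [mkK, _root_.map_add, _root_.map_mul, AlgHom.commutes, sigK_rt, _root_.map_neg]
  ring

lemma mul_sigK (x : QuadAlg F k) : x * sigK F k x = algebraMap F _ (Algebra.norm F x) := by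
  conv_lhs => rw [← mkK_coords F k x]
  conv_rhs => rw [← mkK_coords F k x, norm_mkK]
  rw [sigK_mkK, mkK_mul]
  simp only [mkK, _root_.map_add, _root_.map_mul, _root_.map_sub, _root_.map_pow, _root_.map_neg]
  ring


lemma mkK_one : mkK F k 1 0 = 1 := by simp [mkK]

lemma mkK_congr {a b a' b' : F} (h1 : a = a') (h2 : b = b') : mkK F k a b = mkK F k a' b' := by
  rw [h1, h2]

lemma norm_coords (x : QuadAlg F k) :
    Algebra.norm F x = caK F k x ^ 2 - k * cbK F k x ^ 2 := by
  conv_lhs => rw [← mkK_coords F k x]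
  rw [norm_mkK]

lemma norm_sigK (x : QuadAlg F k) : Algebra.norm F (sigK F k x) = Algebra.norm F x := by
  conv_lhs => rw [← mkK_coords F k x]
  conv_rhs => rw [← mkK_coords F k x]
  rw [sigK_mkK, norm_mkK, norm_mkK]
  ring

lemma unitK_aux {α β : F} (h : α ^ 2 - k * β ^ 2 = 1) :
    mkK F k α β * mkK F k α (-β) = 1 := by
  rw [mkK_mul]
  have e1 : α * α + k * (β * -β) = 1 := by linear_combination h
  have e2 : α * -β + β * α = 0 := by ring
  rw [e1, e2, mkK_one]

/-- The unit of `K` given by a norm-one pair of coordinates. -/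
def unitK (α β : F) (h : α ^ 2 - k * β ^ 2 = 1) : (QuadAlg F k)ˣ :=
  ⟨mkK F k α β, mkK F k α (-β), unitK_aux F k h, by
    rw [mul_comm]; exact unitK_aux F k h⟩

/-- `δ ↦ σ(δ)·δ⁻¹` as a homomorphism on units. -/
def epsU : (QuadAlg F k)ˣ →* (QuadAlg F k)ˣ :=
  MonoidHom.mk' (fun δ => Units.map (sigK F k).toRingHom.toMonoidHom δ * δ⁻¹) (by
    intro a b
    rw [_root_.map_mul, mul_inv]
    exact mul_mul_mul_comm _ _ _ _)

lemma epsU_coe (δ : (QuadAlg F k)ˣ) :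
    ((epsU F k δ : (QuadAlg F k)ˣ) : QuadAlg F k) = sigK F k ↑δ * ↑δ⁻¹ := rfl

lemma norm_epsU (δ : (QuadAlg F k)ˣ) :
    Algebra.norm F ((epsU F k δ : (QuadAlg F k)ˣ) : QuadAlg F k) = 1 := by
  rw [epsU_coe, _root_.map_mul, norm_sigK]
  rw [← _root_.map_mul (Algebra.norm F : QuadAlg F k →* F)]
  rw [← Units.val_mul, mul_inv_cancel]
  simp

lemma epsU_norm_coords (δ : (QuadAlg F k)ˣ) :
    caK F k ((epsU F k δ : (QuadAlg F k)ˣ) : QuadAlg F k) ^ 2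
      - k * cbK F k ((epsU F k δ : (QuadAlg F k)ˣ) : QuadAlg F k) ^ 2 = 1 := by
  rw [← norm_coords]
  exact norm_epsU F k δ

/-- The subtype element of discriminant-4k forms attached to a norm-1 pair. -/
def toV (α β : F) (h : α ^ 2 - k * β ^ 2 = 1) : V4k F k :=
  ⟨toF k α β, by rw [disc_toF, h]; ring⟩

lemma orbit_equiv : Equivalence (orbitRel F k) := by
  constructor
  · intro f
    exact ⟨1, by rw [Matrix.SpecialLinearGroup.coe_one, bcfAct_one]⟩
  · rintro f g ⟨γ, hγ⟩
    refine ⟨γ⁻¹, ?_⟩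
    rw [← hγ, ← bcfAct_mul, ← Matrix.SpecialLinearGroup.coe_mul]
    have hinv : γ * γ⁻¹ = 1 := mul_inv_cancel γ
    rw [hinv, Matrix.SpecialLinearGroup.coe_one, bcfAct_one]
  · rintro f g h ⟨γ₁, h1⟩ ⟨γ₂, h2⟩
    exact ⟨γ₁ * γ₂, by rw [Matrix.SpecialLinearGroup.coe_mul, bcfAct_mul, h1, h2]⟩

lemma mkK_cube (p r : F) :
    (mkK F k p r) ^ 3 = mkK F k (p ^ 3 + 3 * k * p * r ^ 2) (3 * p ^ 2 * r + k * r ^ 3) := by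
  have e2 : (mkK F k p r) ^ 2 = mkK F k (p * p + k * (r * r)) (p * r + r * p) := by
    rw [pow_two, mkK_mul]
  have e3 : (mkK F k p r) ^ 3 = (mkK F k p r) ^ 2 * mkK F k p r := by
    rw [← pow_succ]
  rw [e3, e2, mkK_mul]
  exact mkK_congr F k (by ring) (by ring)

lemma mkK_cube_mul (α β p r : F) :
    mkK F k α β * (mkK F k p r) ^ 3
      = mkK F k (α * (p ^ 3 + 3 * k * p * r ^ 2) + k * (β * (3 * p ^ 2 * r + k * r ^ 3)))
          (β * (p ^ 3 + 3 * k * p * r ^ 2) + α * (3 * p ^ 2 * r + k * r ^ 3)) := by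
  rw [mkK_cube, mkK_mul]
  exact mkK_congr F k (by ring) (by ring)

lemma quot_eq_of_cube {α β α' β' p r : F} (h1 : α ^ 2 - k * β ^ 2 = 1)
    (h1' : α' ^ 2 - k * β' ^ 2 = 1) (hpr : p ^ 2 - k * r ^ 2 = 1)
    (hK : mkK F k α' β' = mkK F k α β * (mkK F k p r) ^ 3) :
    Quot.mk (orbitRel F k) (toV F k α β h1) = Quot.mk (orbitRel F k) (toV F k α' β' h1') := by
  rw [mkK_cube_mul] at hK
  obtain ⟨hα', hβ'⟩ := mkK_inj F k hK
  apply Quot.sound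
  refine ⟨mkSL p (k * r) r p (by linear_combination hpr), ?_⟩
  show bcfAct _ (toF k α β) = toF k α' β'
  rw [mkSL_coe, act_mulmat, hα', hβ']

/-- The map from units to orbits. -/
def gmap (δ : (QuadAlg F k)ˣ) : Quot (orbitRel F k) :=
  Quot.mk _ (toV F k (caK F k ((epsU F k δ : (QuadAlg F k)ˣ) : QuadAlg F k))
    (cbK F k ((epsU F k δ : (QuadAlg F k)ˣ) : QuadAlg F k)) (epsU_norm_coords F k δ))

lemma gmap_mul_cube (δ μ : (QuadAlg F k)ˣ) : gmap F k (δ * μ ^ 3) = gmap F k δ := by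
  unfold gmap
  refine (quot_eq_of_cube F k (epsU_norm_coords F k δ) (epsU_norm_coords F k (δ * μ ^ 3))
    (epsU_norm_coords F k μ) ?_).symm
  rw [mkK_coords, mkK_coords, mkK_coords]
  rw [_root_.map_mul, _root_.map_pow]
  rw [Units.val_mul, Units.val_pow_eq_pow_val]



theorem orbits_biject_with_norm_one_classes
    (h2 : (2 : F) ≠ 0) (h3 : (3 : F) ≠ 0) (hk : k ≠ 0) :
    Nonempty (Quot (orbitRel F k) ≃ (normOnCubeClasses F k).ker) := by
  classical
  -- (1) every cube maps to 1 in the quotient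
  have hcube1 : ∀ w : (QuadAlg F k)ˣ,
      ((w ^ 3 : (QuadAlg F k)ˣ) : (QuadAlg F k)ˣ ⧸ cubes (QuadAlg F k)ˣ) = 1 := by
    intro w
    rw [QuotientGroup.eq_one_iff]
    exact ⟨w, rfl⟩
  have hmulcube : ∀ x w : (QuadAlg F k)ˣ,
      ((x * w ^ 3 : (QuadAlg F k)ˣ) : (QuadAlg F k)ˣ ⧸ cubes (QuadAlg F k)ˣ) = x := by
    intro x w
    rw [QuotientGroup.mk_mul, hcube1, mul_one]
  -- (2) the lifted map on cube classes
  have glift : ∀ a b : (QuadAlg F k)ˣ,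
      (QuotientGroup.leftRel (cubes (QuadAlg F k)ˣ)) a b → gmap F k a = gmap F k b := by
    intro a b hab
    rw [QuotientGroup.leftRel_apply] at hab
    obtain ⟨μ, hμ⟩ := hab
    have hμ' : μ ^ 3 = a⁻¹ * b := hμ
    have hb : b = a * μ ^ 3 := by rw [hμ']; group
    rw [hb, gmap_mul_cube]
  let gbar : ((QuadAlg F k)ˣ ⧸ cubes (QuadAlg F k)ˣ) → Quot (orbitRel F k) :=
    Quotient.lift (gmap F k) glift
  have gbar_mk : ∀ δ : (QuadAlg F k)ˣ, gbar (QuotientGroup.mk δ) = gmap F k δ :=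
    fun _ => rfl
  let Φ : (normOnCubeClasses F k).ker → Quot (orbitRel F k) := fun t => gbar t.1
  -- (3) kernel condition gives a cube root of the norm
  have hker_cu : ∀ δ : (QuadAlg F k)ˣ,
      (QuotientGroup.mk δ : (QuadAlg F k)ˣ ⧸ cubes (QuadAlg F k)ˣ) ∈ (normOnCubeClasses F k).ker
      → ∃ cu : Fˣ, cu ^ 3 = normUnits F k δ := by
    intro δ hmem
    have h1 : normOnCubeClasses F k (QuotientGroup.mk δ) = 1 := hmem
    rw [normOnCubeClasses, QuotientGroup.map_mk, QuotientGroup.eq_one_iff] at h1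
    obtain ⟨cu, hcu⟩ := h1
    exact ⟨cu, hcu⟩
  -- (4) the class of eps δ equals the class of δ, given the kernel condition
  have class_eps : ∀ δ : (QuadAlg F k)ˣ, (∃ cu : Fˣ, cu ^ 3 = normUnits F k δ) →
      ((epsU F k δ : (QuadAlg F k)ˣ) : (QuadAlg F k)ˣ ⧸ cubes (QuadAlg F k)ˣ)
        = QuotientGroup.mk δ := by
    rintro δ ⟨cu, hcu⟩
    set w : (QuadAlg F k)ˣ := Units.map (algebraMap F (QuadAlg F k) : F →+* QuadAlg F k).toMonoidHom cu with hw
    have hNu : Units.map (sigK F k).toRingHom.toMonoidHom δ * δ = w ^ 3 := by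
      apply Units.ext
      rw [Units.val_mul, hw, ← _root_.map_pow, hcu]
      show sigK F k ↑δ * ↑δ = algebraMap F (QuadAlg F k) ((normUnits F k δ : Fˣ) : F)
      rw [mul_comm]
      exact mul_sigK F k ↑δ
    have key : epsU F k δ * δ ^ 3 = w ^ 3 * δ := by
      rw [← hNu]
      show Units.map (sigK F k).toRingHom.toMonoidHom δ * δ⁻¹ * δ ^ 3 = _
      group
      exact (congrArg (fun z => Units.map (sigK F k).toRingHom.toMonoidHom δ * z)
        (pow_two δ)).trans (mul_assoc _ _ _).symm
    have h5 := congrArg (fun z : (QuadAlg F k)ˣ =>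
      (z : (QuadAlg F k)ˣ ⧸ cubes (QuadAlg F k)ˣ)) key
    simp only [QuotientGroup.mk_mul, hcube1, mul_one, one_mul] at h5
    exact h5
  -- (5) injectivity
  have hinj : Function.Injective Φ := by
    rintro ⟨t, ht⟩ ⟨t', ht'⟩ h
    obtain ⟨δ, rfl⟩ := QuotientGroup.mk_surjective t
    obtain ⟨δ', rfl⟩ := QuotientGroup.mk_surjective t'
    have h' : gmap F k δ = gmap F k δ' := h
    have hrel := (Equivalence.eqvGen_iff (orbit_equiv F k)).mp (Quot.eq.mp h')
    obtain ⟨γ, hγ⟩ := hrel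
    obtain ⟨p, r, hpr, hα', hβ'⟩ := inj_core k h2 (epsU_norm_coords F k δ)
      (epsU_norm_coords F k δ') γ hγ
    have hK : mkK F k (caK F k ((epsU F k δ' : (QuadAlg F k)ˣ) : QuadAlg F k))
          (cbK F k ((epsU F k δ' : (QuadAlg F k)ˣ) : QuadAlg F k))
        = mkK F k (caK F k ((epsU F k δ : (QuadAlg F k)ˣ) : QuadAlg F k))
          (cbK F k ((epsU F k δ : (QuadAlg F k)ˣ) : QuadAlg F k)) * (mkK F k p r) ^ 3 := by
      rw [mkK_cube_mul]
      exact mkK_congr F k hα' hβ'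
    have hU : epsU F k δ' = epsU F k δ * (unitK F k p r hpr) ^ 3 := by
      apply Units.ext
      rw [Units.val_mul, Units.val_pow_eq_pow_val]
      calc ((epsU F k δ' : (QuadAlg F k)ˣ) : QuadAlg F k)
          = mkK F k (caK F k ((epsU F k δ' : (QuadAlg F k)ˣ) : QuadAlg F k))
              (cbK F k ((epsU F k δ' : (QuadAlg F k)ˣ) : QuadAlg F k)) :=
            (mkK_coords F k _).symm
        _ = mkK F k (caK F k ((epsU F k δ : (QuadAlg F k)ˣ) : QuadAlg F k))
              (cbK F k ((epsU F k δ : (QuadAlg F k)ˣ) : QuadAlg F k)) * (mkK F k p r) ^ 3 := hK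
        _ = ((epsU F k δ : (QuadAlg F k)ˣ) : QuadAlg F k)
              * ((unitK F k p r hpr : (QuadAlg F k)ˣ) : QuadAlg F k) ^ 3 := by
            rw [mkK_coords]
            rfl
    apply Subtype.ext
    show (QuotientGroup.mk δ : (QuadAlg F k)ˣ ⧸ cubes (QuadAlg F k)ˣ) = QuotientGroup.mk δ'
    have e1 := class_eps δ (hker_cu δ ht)
    have e2 := class_eps δ' (hker_cu δ' ht')
    rw [← e1, ← e2, hU, hmulcube]
  -- (6) surjectivity
  have hsurj : Function.Surjective Φ := by
    intro t
    obtain ⟨⟨f, hf⟩, rfl⟩ := Quot.exists_rep t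
    obtain ⟨γ, α, β, h1, hact⟩ := surj_core k h2 hk f hf
    -- the unit e = mkK α β
    set e : (QuadAlg F k)ˣ := unitK F k α β h1 with he
    have hnormE : normUnits F k e = 1 := by
      apply Units.ext
      show Algebra.norm F ((e : (QuadAlg F k)ˣ) : QuadAlg F k) = 1
      have : ((e : (QuadAlg F k)ˣ) : QuadAlg F k) = mkK F k α β := rfl
      rw [this, norm_mkK, h1]
    have hkerE : (QuotientGroup.mk e : (QuadAlg F k)ˣ ⧸ cubes (QuadAlg F k)ˣ)
        ∈ (normOnCubeClasses F k).ker := by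
      show normOnCubeClasses F k (QuotientGroup.mk e) = 1
      rw [normOnCubeClasses, QuotientGroup.map_mk, hnormE]
      rfl
    refine ⟨⟨QuotientGroup.mk e, hkerE⟩, ?_⟩
    show gbar (QuotientGroup.mk e) = _
    rw [gbar_mk]
    -- gmap e = Quot.mk (toV (coords of eps e)); and eps e = e * (sig e)^3
    have hKe : mkK F k (caK F k ((epsU F k e : (QuadAlg F k)ˣ) : QuadAlg F k))
          (cbK F k ((epsU F k e : (QuadAlg F k)ˣ) : QuadAlg F k))
        = mkK F k α β * (mkK F k α (-β)) ^ 3 := by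
      rw [mkK_coords]
      show sigK F k ((e : (QuadAlg F k)ˣ) : QuadAlg F k)
          * ((e⁻¹ : (QuadAlg F k)ˣ) : QuadAlg F k) = _
      have hv : ((e : (QuadAlg F k)ˣ) : QuadAlg F k) = mkK F k α β := rfl
      have hv' : ((e⁻¹ : (QuadAlg F k)ˣ) : QuadAlg F k) = mkK F k α (-β) := rfl
      rw [hv, hv', sigK_mkK]
      have haux := unitK_aux F k h1
      linear_combination (-(mkK F k α (-β)) ^ 2) * haux
    have h1' : α ^ 2 - k * (-β) ^ 2 = 1 := by linear_combination h1
    have step1 : gmap F k e = Quot.mk (orbitRel F k) (toV F k α β h1) := by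
      unfold gmap
      exact (quot_eq_of_cube F k h1 (epsU_norm_coords F k e) h1' hKe).symm
    rw [step1]
    exact (Quot.sound ⟨γ, hact⟩).symm
  exact ⟨(Equiv.ofBijective Φ ⟨hinj, hsurj⟩).symm⟩


end
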